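/- If f is an H²_ω-inner function and d ≥ 0 is the largest integer such that z^d divides f (i.e., f = z^d g with g(0) ≠ 0), then ⟨z^d, f⟩ · f equals the orthogonal projection of z^d onto the z-invariant subspace [f] generated by f. -/

import Mathlib

noncomputable section
open Complex Filter

namespace WHS

/-- Membership in the weighted Hardy space: the coefficient sequence `a` satisfies
`∑ ω n * |a n|^2 < ∞`. -/
def memH (ω : ℕ → ℝ) (a : ℕ → ℂ) : Prop :=
  Summable fun n => ω n * ‖a n‖ ^ 2

/-- The squared norm `‖f‖²` in the weighted Hardy space. -/
def wNorm2 (ω : ℕ → ℝ) (a : ℕ → ℂ) : ℝ := ∑' n, ω n * ‖a n‖ ^ 2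

/-- The inner product `⟨f, g⟩ = ∑ ω n * a n * conj (b n)` (linear in the first argument). -/
def wInner (ω : ℕ → ℝ) (a b : ℕ → ℂ) : ℂ :=
  ∑' n, (ω n : ℂ) * a n * (starRingEnd ℂ) (b n)

/-- Coefficients of `z^m * f`. -/
def shift (m : ℕ) (a : ℕ → ℂ) : ℕ → ℂ := fun n => if m ≤ n then a (n - m) else 0

/-- Coefficients of `p * f` for a polynomial `p`. -/
def polyMul (p : Polynomial ℂ) (a : ℕ → ℂ) : ℕ → ℂ :=
  fun n => ∑ j ∈ Finset.range (n + 1), p.coeff j * a (n - j)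

/-- Coefficients of the product of power series with coefficients `b` and `a`. -/
def conv (b a : ℕ → ℂ) : ℕ → ℂ :=
  fun n => ∑ j ∈ Finset.range (n + 1), b j * a (n - j)

/-- `f` is an `H²_ω`-inner function: `f ∈ H²_ω`, `‖f‖ = 1` and `⟨z^m f, f⟩ = 0` for all `m ≥ 1`. -/
def IsInner (ω : ℕ → ℝ) (a : ℕ → ℂ) : Prop :=
  memH ω a ∧ wNorm2 ω a = 1 ∧ ∀ m : ℕ, 1 ≤ m → wInner ω (shift m a) a = 0

end WHS


/-- if `f` is `H²_ω`-inner (modelled on `ℓ²`) and `d` is the largest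
integer with `z^d ∣ f`, then `⟨z^d, f⟩ · f` is the orthogonal projection of `z^d`
onto the `z`-invariant subspace `[f]` generated by `f` (the closure of the
polynomial multiples of `f`): it lies in `[f]` and `z^d − ⟨z^d, f⟩ f ⊥ [f]`. -/
theorem stmt13 (ω : ℕ → ℝ) (hpos : ∀ n, 0 < ω n) (hω0 : ω 0 = 1)
    (hlim : Filter.Tendsto (fun n => ω (n + 1) / ω n) Filter.atTop (nhds 1))
    (f : lp (fun _ : ℕ => ℂ) 2)
    (hf : WHS.IsInner ω (fun n => f n / (Real.sqrt (ω n) : ℂ)))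
    (d : ℕ) (hvanish : ∀ n < d, f n = 0) (hd : f d ≠ 0)
    (PM : Polynomial ℂ → lp (fun _ : ℕ => ℂ) 2)
    (hPM : ∀ (p : Polynomial ℂ) (n : ℕ),
      (PM p) n = (Real.sqrt (ω n) : ℂ) *
        ∑ j ∈ Finset.range (n + 1), p.coeff j * (f (n - j) / (Real.sqrt (ω (n - j)) : ℂ))) :
    ((inner ℂ f (lp.single 2 d ((Real.sqrt (ω d) : ℂ))) : ℂ) • f ∈
        (Submodule.span ℂ (Set.range PM)).topologicalClosure) ∧
      lp.single 2 d ((Real.sqrt (ω d) : ℂ)) -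
          (inner ℂ f (lp.single 2 d ((Real.sqrt (ω d) : ℂ))) : ℂ) • f ∈
        ((Submodule.span ℂ (Set.range PM)).topologicalClosure)ᗮ := by
    classical
  obtain ⟨hmem, hnorm, hinner⟩ := hf
  set a : ℕ → ℂ := fun n => f n / (Real.sqrt (ω n) : ℂ) with ha
  have hsne : ∀ n, ((Real.sqrt (ω n) : ℝ) : ℂ) ≠ 0 := fun n => by
    simp [Complex.ofReal_ne_zero, Real.sqrt_ne_zero', hpos n]
  have hsq : ∀ n, ((Real.sqrt (ω n) : ℝ) : ℂ) * ((Real.sqrt (ω n) : ℝ) : ℂ) = (ω n : ℂ) := by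
    intro n
    rw [← Complex.ofReal_mul, Real.mul_self_sqrt (hpos n).le]
  have hfa : ∀ n, ((Real.sqrt (ω n) : ℝ) : ℂ) * a n = f n := fun n => by
    simp only [ha]
    field_simp
    exact mul_div_cancel_left₀ _ (hsne n)
  -- monomial formula for PM
  have hPMX : ∀ m n, (PM (Polynomial.X ^ m)) n
      = ((Real.sqrt (ω n) : ℝ) : ℂ) * WHS.shift m a n := by
    intro m n
    rw [hPM]
    congr 1
    simp only [WHS.shift, Polynomial.coeff_X_pow, ite_mul, one_mul, zero_mul,
      Finset.sum_ite_eq', Finset.mem_range, Nat.lt_succ_iff]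
    rfl
  -- PM 1 = f
  have hPM1 : PM 1 = f := by
    apply lp.ext
    funext n
    rw [hPM]
    simp only [Polynomial.coeff_one, ite_mul, one_mul, zero_mul,
      Finset.sum_ite_eq', Finset.mem_range, Nat.lt_succ_iff, Nat.zero_le, if_pos,
      Nat.sub_zero]
    exact hfa n
  have hshift0 : WHS.shift 0 a = a := by
    funext n; simp [WHS.shift]
  -- inner (PM X^m) f = conj (wInner (shift m a) a)
  have hIf : ∀ m, (inner ℂ (PM (Polynomial.X ^ m)) f : ℂ)
      = (starRingEnd ℂ) (WHS.wInner ω (WHS.shift m a) a) := by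
    intro m
    rw [lp.inner_eq_tsum, WHS.wInner, starRingEnd_apply, tsum_star]
    congr 1
    funext n
    rw [hPMX, RCLike.inner_apply]
    show f n * (starRingEnd ℂ) (((Real.sqrt (ω n) : ℝ) : ℂ) * WHS.shift m a n)
      = (starRingEnd ℂ) ((ω n : ℂ) * WHS.shift m a n * (starRingEnd ℂ) (a n))
    simp only [map_mul, Complex.conj_ofReal, Complex.conj_conj]
    rw [← hfa n, ← hsq n]
    ring
  -- values of wInner
  have hw0 : WHS.wInner ω (WHS.shift 0 a) a = 1 := by
    rw [hshift0, WHS.wInner]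
    have hpt : ∀ n, (ω n : ℂ) * a n * (starRingEnd ℂ) (a n)
        = ((ω n * ‖a n‖ ^ 2 : ℝ) : ℂ) := by
      intro n
      rw [mul_assoc, Complex.mul_conj]
      rw [Complex.normSq_eq_norm_sq]
      push_cast
      ring
    calc (∑' n, (ω n : ℂ) * a n * (starRingEnd ℂ) (a n))
        = ∑' n, ((ω n * ‖a n‖ ^ 2 : ℝ) : ℂ) := by
          exact tsum_congr hpt
      _ = ((∑' n, (ω n * ‖a n‖ ^ 2 : ℝ) : ℝ) : ℂ) := (Complex.ofReal_tsum _).symm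
      _ = 1 := by rw [show (∑' n, (ω n * ‖a n‖ ^ 2 : ℝ)) = 1 from hnorm]; norm_num
  have hIf0 : (inner ℂ (PM (Polynomial.X ^ 0)) f : ℂ) = 1 := by
    rw [hIf, hw0, map_one]
  have hIfm : ∀ m, 1 ≤ m → (inner ℂ (PM (Polynomial.X ^ m)) f : ℂ) = 0 := by
    intro m hm
    rw [hIf, hinner m hm, map_zero]
  -- inner with the single
  set c : ℂ := (inner ℂ f (lp.single 2 d ((Real.sqrt (ω d) : ℂ))) : ℂ) with hc
  have hcval : c = (starRingEnd ℂ) (f d) * ((Real.sqrt (ω d) : ℝ) : ℂ) := by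
    rw [hc, lp.inner_single_right]
    simp [RCLike.inner_apply]
    ring
  have hIe : ∀ m, (inner ℂ (PM (Polynomial.X ^ m)) (lp.single 2 d ((Real.sqrt (ω d) : ℂ))) : ℂ)
      = (starRingEnd ℂ) ((PM (Polynomial.X ^ m)) d) * ((Real.sqrt (ω d) : ℝ) : ℂ) := by
    intro m
    rw [lp.inner_single_right]
    simp [RCLike.inner_apply]
    ring
  have hIe0 : (inner ℂ (PM (Polynomial.X ^ 0)) (lp.single 2 d ((Real.sqrt (ω d) : ℂ))) : ℂ) = c := by
    rw [hIe, hPMX, hshift0, hfa d, hcval]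
  have hIem : ∀ m, 1 ≤ m →
      (inner ℂ (PM (Polynomial.X ^ m)) (lp.single 2 d ((Real.sqrt (ω d) : ℂ))) : ℂ) = 0 := by
    intro m hm
    rw [hIe, hPMX]
    have hz : WHS.shift m a d = 0 := by
      simp only [WHS.shift]
      split_ifs with h
      · have : d - m < d := Nat.sub_lt_self hm h
        rw [ha]
        simp [hvanish _ this]
      · rfl
    rw [hz]
    simp
  -- orthogonality to each monomial image
  set x : lp (fun _ : ℕ => ℂ) 2 :=
    lp.single 2 d ((Real.sqrt (ω d) : ℂ)) - c • f with hx
  have hmono : ∀ m, (inner ℂ (PM (Polynomial.X ^ m)) x : ℂ) = 0 := by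
    intro m
    rw [hx, inner_sub_right, inner_smul_right]
    rcases Nat.eq_zero_or_pos m with hm | hm
    · subst hm
      rw [hIe0, hIf0]
      ring
    · rw [hIem m hm, hIfm m hm]
      ring
  -- decomposition of PM p into monomials
  have hdecomp : ∀ p : Polynomial ℂ,
      PM p = ∑ j ∈ Finset.range (p.natDegree + 1), p.coeff j • PM (Polynomial.X ^ j) := by
    intro p
    apply lp.ext
    funext n
    rw [lp.coeFn_sum, Finset.sum_apply]
    have hterm : ∀ j, (p.coeff j • PM (Polynomial.X ^ j)) n
        = p.coeff j * (((Real.sqrt (ω n) : ℝ) : ℂ) * WHS.shift j a n) := by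
      intro j
      rw [lp.coeFn_smul, Pi.smul_apply, smul_eq_mul, hPMX]
    simp only [hterm]
    rw [hPM]
    set M := max (p.natDegree + 1) (n + 1) with hM
    have hA : ∑ j ∈ Finset.range (n + 1), p.coeff j * (f (n - j) / (Real.sqrt (ω (n - j)) : ℂ))
        = ∑ j ∈ Finset.range M, p.coeff j * WHS.shift j a n := by
      calc ∑ j ∈ Finset.range (n + 1), p.coeff j * (f (n - j) / (Real.sqrt (ω (n - j)) : ℂ))
          = ∑ j ∈ Finset.range (n + 1), p.coeff j * WHS.shift j a n := by
            apply Finset.sum_congr rfl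
            intro j hj
            have hjn : j ≤ n := Nat.lt_succ_iff.1 (Finset.mem_range.1 hj)
            simp only [WHS.shift, if_pos hjn, ha]
        _ = ∑ j ∈ Finset.range M, p.coeff j * WHS.shift j a n := by
            apply Finset.sum_subset (Finset.range_subset_range.2 (le_max_right _ _))
            intro j _ hj
            have hjn : ¬ j ≤ n := fun h => hj (Finset.mem_range.2 (Nat.lt_succ_iff.2 h))
            simp only [WHS.shift, if_neg hjn, mul_zero]
    have hB : ∑ j ∈ Finset.range (p.natDegree + 1),
          p.coeff j * (((Real.sqrt (ω n) : ℝ) : ℂ) * WHS.shift j a n)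
        = ∑ j ∈ Finset.range M,
          p.coeff j * (((Real.sqrt (ω n) : ℝ) : ℂ) * WHS.shift j a n) := by
      apply Finset.sum_subset (Finset.range_subset_range.2 (le_max_left _ _))
      intro j _ hj
      have hdeg : p.natDegree + 1 ≤ j := Nat.le_of_not_lt (fun h => hj (Finset.mem_range.2 h))
      rw [Polynomial.coeff_eq_zero_of_natDegree_lt (Nat.lt_of_succ_le hdeg), zero_mul]
    rw [hA, hB, Finset.mul_sum]
    apply Finset.sum_congr rfl
    intro j _
    ring
  -- x is orthogonal to span
  have horth : ∀ y ∈ Submodule.span ℂ (Set.range PM), (inner ℂ y x : ℂ) = 0 := by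
    intro y hy
    induction hy using Submodule.span_induction with
    | mem y hy =>
        obtain ⟨p, rfl⟩ := hy
        rw [hdecomp p, sum_inner]
        apply Finset.sum_eq_zero
        intro j _
        rw [inner_smul_left, hmono j, mul_zero]
    | zero => exact inner_zero_left _
    | add y z _ _ hy hz => rw [inner_add_left, hy, hz, add_zero]
    | smul r y _ hy => rw [inner_smul_left, hy, mul_zero]
  constructor
  · have hfmem : f ∈ Submodule.span ℂ (Set.range PM) :=
      Submodule.subset_span ⟨1, hPM1⟩
    exact Submodule.smul_mem _ _
      (Submodule.le_topologicalClosure _ hfmem)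
  · rw [← Submodule.orthogonal_orthogonal_eq_closure, Submodule.triorthogonal_eq_orthogonal]
    exact (Submodule.mem_orthogonal _ _).2 horth
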